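/- For every n ∈ ℕ with n ≥ 1, let v_n = π^{n/2}/Γ(n/2 + 1) be the volume of the Euclidean unit ball in ℝ^n. Then, with c_k = (2π)^{−k}·(∏_{j=1}^k 2j·v_{2j})², one has lim_{k→∞} k^{−2}·log( v_{2k²}·k^{k²} / c_k ) = −1/2. -/

import Mathlib

open Real Filter Finset

/-- `ballVol n` is the volume `v_n = π^{n/2}/Γ(n/2 + 1)` of the Euclidean unit ball in `ℝ^n`. -/
noncomputable def ballVol (n : ℕ) : ℝ :=
  Real.pi ^ ((n : ℝ) / 2) / Real.Gamma ((n : ℝ) / 2 + 1)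

/-- St. Raymond's constant `c_k = (2π)^{−k}·(∏_{j=1}^k 2j·v_{2j})²`. -/
noncomputable def srConst (k : ℕ) : ℝ :=
  ((2 * Real.pi) ^ k)⁻¹ * (∏ j ∈ Finset.Icc 1 k, (2 * (j : ℝ) * ballVol (2 * j))) ^ 2

namespace SR17
noncomputable def Lf (n : ℕ) : ℝ := Real.log (n.factorial : ℝ)
noncomputable def Tf (k : ℕ) : ℝ := ∑ j ∈ Finset.Icc 1 k, (j : ℝ) * Real.log j
noncomputable def Sf (k : ℕ) : ℝ := ∑ j ∈ Finset.Icc 1 k, Lf j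

lemma Lf_succ (n : ℕ) : Lf (n + 1) = Lf n + Real.log (n + 1) := by
  unfold Lf
  rw [Nat.factorial_succ]
  push_cast
  rw [Real.log_mul (by positivity) (by exact_mod_cast (Nat.factorial_pos n).ne')]
  ring

lemma Sf_eq (k : ℕ) : Sf k = (k + 1 : ℝ) * Lf k - Tf k := by
  induction k with
  | zero => simp [Sf, Tf, Lf]
  | succ k ih =>
    unfold Sf Tf at *
    rw [Finset.sum_Icc_succ_top (Nat.succ_le_succ (Nat.zero_le k)),
        Finset.sum_Icc_succ_top (Nat.succ_le_succ (Nat.zero_le k)), Lf_succ]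
    push_cast
    push_cast at ih
    nlinarith [ih]

lemma sumlog (k : ℕ) : ∑ j ∈ Finset.Icc 1 k, Real.log j = Lf k := by
  induction k with
  | zero => simp [Lf]
  | succ k ih =>
    rw [Finset.sum_Icc_succ_top (Nat.succ_le_succ (Nat.zero_le k)), ih, Lf_succ]
    push_cast
    ring

lemma gauss (k : ℕ) : ∑ j ∈ Finset.Icc 1 k, (j : ℝ) = k * (k + 1) / 2 := by
  induction k with
  | zero => simp
  | succ k ih =>
    rw [Finset.sum_Icc_succ_top (Nat.succ_le_succ (Nat.zero_le k)), ih]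
    push_cast
    ring

end SR17

namespace SR17

lemma ballVol_two (m : ℕ) : ballVol (2 * m) = Real.pi ^ m / (m.factorial : ℝ) := by
  unfold ballVol
  have h1 : ((2 * m : ℕ) : ℝ) / 2 = (m : ℝ) := by push_cast; ring
  rw [h1, Real.Gamma_nat_eq_factorial, Real.rpow_natCast]

lemma ballVol_two_pos (m : ℕ) : 0 < ballVol (2 * m) := by
  rw [ballVol_two]
  have := Real.pi_pos
  positivity

lemma log_ballVol (m : ℕ) : Real.log (ballVol (2 * m)) = m * Real.log Real.pi - Lf m := by
  rw [ballVol_two, Real.log_div (by positivity) (by exact_mod_cast (Nat.factorial_pos m).ne'),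
    Real.log_pow, Lf]

lemma srConst_pos (k : ℕ) : 0 < srConst k := by
  unfold srConst
  have h : 0 < ∏ j ∈ Finset.Icc 1 k, (2 * (j : ℝ) * ballVol (2 * j)) := by
    apply Finset.prod_pos
    intro j hj
    have hj1 : 1 ≤ j := (Finset.mem_Icc.mp hj).1
    have := ballVol_two_pos j
    have : (0:ℝ) < j := by exact_mod_cast hj1
    positivity
  have := Real.pi_pos
  positivity

lemma log_srConst (k : ℕ) :
    Real.log (srConst k) = k * Real.log 2 + (k : ℝ) ^ 2 * Real.log Real.pi
      + 2 * Lf k - 2 * Sf k := by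
  unfold srConst
  have hP : ∀ j ∈ Finset.Icc 1 k, (2 * (j : ℝ) * ballVol (2 * j)) ≠ 0 := by
    intro j hj
    have hj1 : 1 ≤ j := (Finset.mem_Icc.mp hj).1
    have := ballVol_two_pos j
    have : (0:ℝ) < j := by exact_mod_cast hj1
    positivity
  have hprod : 0 < ∏ j ∈ Finset.Icc 1 k, (2 * (j : ℝ) * ballVol (2 * j)) := by
    apply Finset.prod_pos; intro j hj
    have hj1 : 1 ≤ j := (Finset.mem_Icc.mp hj).1
    have := ballVol_two_pos j
    have : (0:ℝ) < j := by exact_mod_cast hj1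
    positivity
  have hπ := Real.pi_pos
  rw [Real.log_mul (by positivity) (by positivity), Real.log_inv, Real.log_pow,
    Real.log_pow, Real.log_prod hP, Real.log_mul (by positivity) hπ.ne']
  have hterm : ∀ j ∈ Finset.Icc 1 k, Real.log (2 * (j : ℝ) * ballVol (2 * j))
      = Real.log 2 + Real.log j + (j : ℝ) * Real.log Real.pi - Lf j := by
    intro j hj
    have hj1 : 1 ≤ j := (Finset.mem_Icc.mp hj).1
    have hj0 : (0:ℝ) < j := by exact_mod_cast hj1
    rw [Real.log_mul (by positivity) (ballVol_two_pos j).ne',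
      Real.log_mul (by norm_num) hj0.ne', log_ballVol]
    ring
  rw [Finset.sum_congr rfl hterm]
  simp only [Finset.sum_add_distrib, Finset.sum_sub_distrib, Finset.sum_const,
    Nat.card_Icc, smul_eq_mul, ← Finset.sum_mul, sumlog, gauss, ← Sf.eq_def]
  simp only [Nat.add_sub_cancel]
  push_cast
  ring

lemma log_main (k : ℕ) (hk : 1 ≤ k) :
    Real.log (ballVol (2 * k ^ 2) * (k : ℝ) ^ (k ^ 2) / srConst k)
      = (k : ℝ) ^ 2 * Real.log k - Lf (k ^ 2) - k * Real.log 2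
        + 2 * k * Lf k - 2 * Tf k := by
  have hk0 : (0:ℝ) < k := by exact_mod_cast hk
  have hb := ballVol_two_pos (k ^ 2)
  have hs := srConst_pos k
  rw [Real.log_div (by positivity) hs.ne', Real.log_mul hb.ne' (by positivity),
    Real.log_pow, log_ballVol, log_srConst, Sf_eq]
  push_cast
  ring

end SR17

namespace SR17

lemma lemA : Tendsto (fun n : ℕ => (Lf n - n * Real.log n + n) / n) atTop (nhds 0) := by
  have key : ∀ n : ℕ, 1 ≤ n → (Lf n - n * Real.log n + n) / n
      = Real.log (Stirling.stirlingSeq n) / n + Real.log (2 * n) / (2 * n) := by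
    intro n hn
    have hN : (0:ℝ) < n := by exact_mod_cast hn
    have hD : (0:ℝ) < Real.sqrt (2 * n) * ((n : ℝ) / Real.exp 1) ^ n := by positivity
    have hfac : (n.factorial : ℝ) = Stirling.stirlingSeq n *
        (Real.sqrt (2 * n) * ((n : ℝ) / Real.exp 1) ^ n) := by
      rw [Stirling.stirlingSeq]
      field_simp
    have hs : 0 < Stirling.stirlingSeq n := by
      rw [Stirling.stirlingSeq]
      have : (0:ℝ) < n.factorial := by exact_mod_cast n.factorial_pos
      positivity
    have hLf : Lf n = Real.log (Stirling.stirlingSeq n) + (Real.log (2 * n) / 2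
        + n * (Real.log n - 1)) := by
      rw [Lf, hfac, Real.log_mul hs.ne' hD.ne', Real.log_mul (by positivity) (by positivity),
        Real.log_sqrt (by positivity), Real.log_pow,
        Real.log_div hN.ne' (Real.exp_pos 1).ne', Real.log_exp]
    rw [hLf]
    field_simp
    ring
  have t1 : Tendsto (fun n : ℕ => Real.log (Stirling.stirlingSeq n) / n) atTop (nhds 0) := by
    have hc : Tendsto (fun n : ℕ => Real.log (Stirling.stirlingSeq n)) atTop
        (nhds (Real.log (Real.sqrt Real.pi))) := by
      have hπ : (0:ℝ) < Real.sqrt Real.pi := Real.sqrt_pos.mpr Real.pi_pos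
      exact ((Real.continuousAt_log hπ.ne').tendsto).comp Stirling.tendsto_stirlingSeq_sqrt_pi
    have hinv : Tendsto (fun n : ℕ => ((n : ℝ))⁻¹) atTop (nhds 0) :=
      tendsto_inv_atTop_nhds_zero_nat
    simpa [div_eq_mul_inv] using hc.mul hinv
  have t2 : Tendsto (fun n : ℕ => Real.log (2 * n) / (2 * n)) atTop (nhds 0) := by
    have hbase : Tendsto (fun x : ℝ => Real.log x / x) atTop (nhds 0) :=
      Real.isLittleO_log_id_atTop.tendsto_div_nhds_zero
    have harg : Tendsto (fun n : ℕ => (2 : ℝ) * n) atTop atTop :=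
      (tendsto_natCast_atTop_atTop).const_mul_atTop (by norm_num)
    exact hbase.comp harg
  have := (t1.add t2)
  rw [add_zero] at this
  refine this.congr' ?_
  filter_upwards [eventually_ge_atTop 1] with n hn
  exact (key n hn).symm

end SR17

namespace SR17

lemma intF (b : ℝ) (hb : 1 ≤ b) :
    ∫ x in (1:ℝ)..b, x * Real.log x = b ^ 2 / 2 * Real.log b - b ^ 2 / 4 + 1 / 4 := by
  have hderiv : ∀ x ∈ Set.uIcc (1:ℝ) b,
      HasDerivAt (fun y : ℝ => y ^ 2 / 2 * Real.log y - y ^ 2 / 4) (x * Real.log x) x := by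
    intro x hx
    rw [Set.uIcc_of_le hb] at hx
    have hx0 : (0:ℝ) < x := lt_of_lt_of_le zero_lt_one hx.1
    have h1 : HasDerivAt (fun y : ℝ => y ^ 2) (2 * x) x := by
      simpa using hasDerivAt_pow 2 x
    have h2 := ((h1.div_const 2).mul (Real.hasDerivAt_log hx0.ne')).sub (h1.div_const 4)
    refine h2.congr_deriv ?_
    field_simp
    ring
  have hInt : IntervalIntegrable (fun x : ℝ => x * Real.log x) MeasureTheory.volume 1 b := by
    apply ContinuousOn.intervalIntegrable
    apply continuousOn_id.mul (Real.continuousOn_log.mono ?_)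
    rw [Set.uIcc_of_le hb]
    intro x hx
    exact (lt_of_lt_of_le zero_lt_one hx.1).ne'
  rw [intervalIntegral.integral_eq_sub_of_hasDerivAt hderiv hInt]
  simp [Real.log_one]

lemma monoOn (c : ℝ) : MonotoneOn (fun x : ℝ => x * Real.log x) (Set.Icc 1 c) := by
  intro x hx y hy hxy
  have hx1 : (1:ℝ) ≤ x := hx.1
  have hy0 : (0:ℝ) ≤ y := le_trans zero_le_one hy.1
  exact mul_le_mul hxy (Real.log_le_log (by linarith) hxy) (Real.log_nonneg hx1) hy0

lemma Tf_eq_shift (k : ℕ) :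
    ∑ i ∈ Finset.Ico 1 k, ((i+1 : ℕ) : ℝ) * Real.log ((i+1 : ℕ) : ℝ) = Tf k := by
  induction k with
  | zero => simp [Tf]
  | succ k ih =>
    rcases Nat.eq_zero_or_pos k with rfl | hk
    · simp [Tf]
    · rw [Finset.sum_Ico_succ_top hk, ih]
      unfold Tf
      rw [Finset.sum_Icc_succ_top (Nat.succ_le_succ (Nat.zero_le k))]

lemma Tf_split (k : ℕ) (hk : 1 ≤ k) :
    Tf k = (∑ i ∈ Finset.Ico 1 k, (i : ℝ) * Real.log i) + (k : ℝ) * Real.log k := by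
  unfold Tf
  rw [← Finset.Ico_add_one_right_eq_Icc, Finset.sum_Ico_succ_top hk]

lemma lemB : Tendsto (fun k : ℕ => Tf k / (k : ℝ) ^ 2 - Real.log k / 2) atTop
    (nhds (-(1/4))) := by
  have hlow : ∀ᶠ k : ℕ in atTop, -(1/4 : ℝ) ≤ Tf k / (k : ℝ) ^ 2 - Real.log k / 2 := by
    filter_upwards [eventually_ge_atTop 1] with k hk
    have hk0 : (0:ℝ) < k := by exact_mod_cast hk
    have hmono : MonotoneOn (fun x : ℝ => x * Real.log x) (Set.Icc ((1:ℕ):ℝ) ((k:ℕ):ℝ)) := by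
      simpa using monoOn (k:ℝ)
    have h := hmono.integral_le_sum_Ico hk
    simp only [Nat.cast_one] at h
    rw [intF (k : ℝ) (by exact_mod_cast hk)] at h
    rw [Tf_eq_shift k] at h
    have hk2 : (0:ℝ) < (k:ℝ)^2 := by positivity
    rw [← sub_nonneg]
    have heq : Tf k / (k:ℝ)^2 - Real.log k / 2 - (-(1/4)) =
        (Tf k - ((k:ℝ)^2/2*Real.log k - (k:ℝ)^2/4 + 1/4)) / (k:ℝ)^2 + 1/(4*(k:ℝ)^2) := by
      field_simp
      ring
    rw [heq]
    have h1 : (0:ℝ) ≤ (Tf k - ((k:ℝ)^2/2*Real.log k - (k:ℝ)^2/4 + 1/4)) / (k:ℝ)^2 :=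
      div_nonneg (by linarith) hk2.le
    have h2 : (0:ℝ) < 1/(4*(k:ℝ)^2) := by positivity
    linarith
  have hupp : ∀ᶠ k : ℕ in atTop, Tf k / (k : ℝ) ^ 2 - Real.log k / 2
      ≤ -(1/4 : ℝ) + 1/(4*(k:ℝ)^2) + Real.log k / k := by
    filter_upwards [eventually_ge_atTop 1] with k hk
    have hk0 : (0:ℝ) < k := by exact_mod_cast hk
    have hmono : MonotoneOn (fun x : ℝ => x * Real.log x) (Set.Icc ((1:ℕ):ℝ) ((k:ℕ):ℝ)) := by
      simpa using monoOn (k:ℝ)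
    have h := hmono.sum_le_integral_Ico hk
    simp only [Nat.cast_one] at h
    rw [intF (k : ℝ) (by exact_mod_cast hk)] at h
    have hsplit := Tf_split k hk
    have hk2 : (0:ℝ) < (k:ℝ)^2 := by positivity
    have hTf : Tf k ≤ (k:ℝ)^2/2*Real.log k - (k:ℝ)^2/4 + 1/4 + (k:ℝ)*Real.log k := by
      rw [hsplit]; linarith
    rw [div_sub_div _ _ hk2.ne' (two_ne_zero), div_le_iff₀ (by positivity)]
    have hgoal : (-(1/4) + 1/(4*(k:ℝ)^2) + Real.log k / k) * ((k:ℝ)^2 * 2) =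
        ((k:ℝ)^2/2*Real.log k - (k:ℝ)^2/4 + 1/4 + (k:ℝ)*Real.log k) * 2 - (k:ℝ)^2*Real.log k := by
      field_simp
      ring
    rw [hgoal]
    linarith
  have hupp_lim : Tendsto (fun k : ℕ => -(1/4 : ℝ) + 1/(4*(k:ℝ)^2) + Real.log k / k) atTop
      (nhds (-(1/4))) := by
    have t1 : Tendsto (fun k : ℕ => 1/(4*(k:ℝ)^2)) atTop (nhds 0) := by
      have harg : Tendsto (fun k : ℕ => 4*(k:ℝ)^2) atTop atTop := by
        apply tendsto_atTop_mono ?_ tendsto_natCast_atTop_atTop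
        intro k
        have hk2 : (k:ℝ) ≤ (k:ℝ)^2 := by
          have := Nat.le_self_pow two_ne_zero k
          exact_mod_cast this
        nlinarith [sq_nonneg (k:ℝ)]
      refine harg.inv_tendsto_atTop.congr fun k => ?_
      simp [one_div]
    have t2 : Tendsto (fun k : ℕ => Real.log k / (k:ℝ)) atTop (nhds 0) :=
      Real.isLittleO_log_id_atTop.tendsto_div_nhds_zero.comp tendsto_natCast_atTop_atTop
    have := (tendsto_const_nhds (x := -(1/4:ℝ)) (f := atTop)).add (t1.add t2)
    simpa [add_assoc] using this
  exact tendsto_of_tendsto_of_tendsto_of_le_of_le' tendsto_const_nhds hupp_lim hlow hupp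

end SR17


/-- Lemma A.3: `lim_{k→∞} k⁻²·log( v_{2k²}·k^{k²} / c_k ) = −1/2`. -/
theorem stmt17 :
    Filter.Tendsto
      (fun k : ℕ => ((k : ℝ) ^ 2)⁻¹ *
        Real.log (ballVol (2 * k ^ 2) * (k : ℝ) ^ (k ^ 2) / srConst k))
      Filter.atTop (nhds (-1 / 2)) := by
  have hsq : Tendsto (fun k : ℕ => k ^ 2) atTop atTop :=
    tendsto_atTop_mono (fun n => Nat.le_self_pow two_ne_zero n) tendsto_id
  have hA2 : Tendsto (fun k : ℕ =>
      (SR17.Lf (k^2) - ((k^2:ℕ):ℝ) * Real.log ((k^2:ℕ):ℝ) + ((k^2:ℕ):ℝ)) / ((k^2:ℕ):ℝ))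
      atTop (nhds 0) := SR17.lemA.comp hsq
  have hG : Tendsto (fun k : ℕ => (-2:ℝ) * (SR17.Tf k/(k:ℝ)^2 - Real.log k/2) - 1
      - (SR17.Lf (k^2) - ((k^2:ℕ):ℝ)*Real.log ((k^2:ℕ):ℝ) + ((k^2:ℕ):ℝ))/((k^2:ℕ):ℝ)
      + 2*((SR17.Lf k - k*Real.log k + k)/(k:ℝ)) - Real.log 2/(k:ℝ))
      atTop (nhds (-1/2)) := by
    have h1 := SR17.lemB.const_mul (-2:ℝ)
    have h2 := SR17.lemA.const_mul (2:ℝ)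
    have h3 : Tendsto (fun k : ℕ => Real.log 2 / (k:ℝ)) atTop (nhds 0) :=
      tendsto_const_nhds.div_atTop tendsto_natCast_atTop_atTop
    have h := (((h1.sub (tendsto_const_nhds (x := (1:ℝ)))).sub hA2).add h2).sub h3
    convert h using 1
    norm_num
  refine hG.congr' ?_
  filter_upwards [eventually_ge_atTop 1] with k hk
  have hk0 : (0:ℝ) < k := by exact_mod_cast hk
  rw [SR17.log_main k hk]
  have hc : ((k^2 : ℕ) : ℝ) = (k:ℝ)^2 := by push_cast; ring
  rw [hc, Real.log_pow]
  push_cast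
  field_simp
  ring
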